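/- arXiv:1009.0436 — 7 statements merged into one kernel-verified Lean document; each statement's English description precedes it below -/
import Mathlib

section
/- Let a, b, p, q be vectors in ℝ³ with a and b linearly independent, and let λ₁₂, λ₁₄, λ₂₃, λ₄₃, κ₁₂, κ₁₄, κ₂₃, κ₄₃ be real numbers. Suppose p = λ₁₂·a + κ₁₂·b, p = λ₄₃·a + κ₄₃·q, q = κ₁₄·a + λ₁₄·b, and q = λ₂₃·b + κ₂₃·p. Then κ₁₂ = λ₁₄·κ₄₃, κ₁₄ = λ₁₂·κ₂₃, λ₁₂ − λ₄₃ = κ₁₄·κ₄₃, and λ₁₄ − λ₂₃ = κ₁₂·κ₂₃. (Necessity part of Theorem 1: the G¹ compatibility conditions at the common vertex of a tangent-plane-continuous 4-patch surface, with a = r⁽¹⁾_u, b = r⁽¹⁾_v, p = r⁽³⁾_u, q = r⁽³⁾_v at the vertex.) -/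
/-- Necessity part of Theorem 1: the G¹ compatibility conditions at the common
vertex of a tangent-plane-continuous 4-patch surface. -/
theorem g1_compatibility_necessary
    (a b p q : EuclideanSpace ℝ (Fin 3))
    (hab : LinearIndependent ℝ ![a, b])
    (l12 l14 l23 l43 k12 k14 k23 k43 : ℝ)
    (h1 : p = l12 • a + k12 • b)
    (h2 : p = l43 • a + k43 • q)
    (h3 : q = k14 • a + l14 • b)
    (h4 : q = l23 • b + k23 • p) :
    k12 = l14 * k43 ∧ k14 = l12 * k23 ∧
    l12 - l43 = k14 * k43 ∧ l14 - l23 = k12 * k23 := by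
  rw [LinearIndependent.pair_iff] at hab
  have e1 : (l12 - (l43 + k43 * k14)) • a + (k12 - k43 * l14) • b = 0 := by
    have h := h1.symm.trans h2
    rw [h3] at h
    linear_combination (norm := module) h
  have e2 : (k14 - k23 * l12) • a + (l14 - (l23 + k23 * k12)) • b = 0 := by
    have h := h3.symm.trans h4
    rw [h1] at h
    linear_combination (norm := module) h
  obtain ⟨ha1, hb1⟩ := hab _ _ e1
  obtain ⟨ha2, hb2⟩ := hab _ _ e2
  exact ⟨by linear_combination hb1, by linear_combination ha2,
    by linear_combination ha1, by linear_combination hb2⟩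
end

section
/- Let a, b be vectors in ℝ³ and let λ₁₂, λ₁₄, λ₂₃, λ₄₃, κ₁₂, κ₁₄, κ₂₃, κ₄₃ be real numbers satisfying the G¹ compatibility relations κ₁₂ = λ₁₄·κ₄₃, κ₁₄ = λ₁₂·κ₂₃, λ₁₂ − λ₄₃ = κ₁₄·κ₄₃, and λ₁₄ − λ₂₃ = κ₁₂·κ₂₃. Define p := λ₁₂·a + κ₁₂·b and q := κ₁₄·a + λ₁₄·b. Then p = λ₄₃·a + κ₄₃·q and q = λ₂₃·b + κ₂₃·p. (Sufficiency part of Theorem 1 at the vertex: under the compatibility conditions, the four vertex junction equations can be satisfied simultaneously.) -/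
/-- Sufficiency part of Theorem 1 at the vertex: under the compatibility
conditions, the four vertex junction equations can be satisfied simultaneously. -/
theorem g1_compatibility_sufficient
    (a b : EuclideanSpace ℝ (Fin 3))
    (l12 l14 l23 l43 k12 k14 k23 k43 : ℝ)
    (h1 : k12 = l14 * k43)
    (h2 : k14 = l12 * k23)
    (h3 : l12 - l43 = k14 * k43)
    (h4 : l14 - l23 = k12 * k23) :
    l12 • a + k12 • b = l43 • a + k43 • (k14 • a + l14 • b) ∧
    k14 • a + l14 • b = l23 • b + k23 • (l12 • a + k12 • b) := by
  constructor <;> · match_scalars <;> nlinarith [h1,h2,h3,h4]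
end

section
/- Let a, b be linearly independent vectors in ℝ³ and let A, B, C, S, T, W, P, Q be vectors in ℝ³. Let λ₁₂, λ₁₄, λ₂₃, λ₄₃, κ₁₂, κ₁₄, κ₂₃, κ₄₃ be real numbers satisfying the G¹ compatibility relations κ₁₂ = λ₁₄·κ₄₃, κ₁₄ = λ₁₂·κ₂₃, λ₁₂ − λ₄₃ = κ₁₄·κ₄₃, λ₁₄ − λ₂₃ = κ₁₂·κ₂₃, and let λ'₁₂, λ'₁₄, λ'₂₃, λ'₄₃, κ'₁₂, κ'₁₄, κ'₂₃, κ'₄₃, μ₁₂, ν₁₂, μ₁₄, ν₁₄ be real numbers. Assume: S = λ'₁₂·a + λ₁₂·B + κ'₁₂·b + κ₁₂·C; W = κ'₁₄·a + λ'₁₄·b + λ₁₄·B + κ₁₄·A; T = λ'₄₃·a + λ₄₃·W + κ'₄₃·(λ₁₄·b + κ₁₄·a) + κ₄₃·Q; T = λ'₂₃·b + λ₂₃·S + κ'₂₃·(λ₁₂·a + κ₁₂·b) + κ₂₃·P; P = λ₁₂²·A + 2λ₁₂κ₁₂·B + κ₁₂²·C + μ₁₂·a + ν₁₂·b; Q =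 λ₁₄²·C + 2λ₁₄κ₁₄·B + κ₁₄²·A + μ₁₄·b + ν₁₄·a. Then −λ'₄₃ − λ₄₃·κ'₁₄ + λ₂₃·λ'₁₂ + λ₁₂·κ'₂₃ − κ₁₄·κ'₄₃ + κ₂₃·μ₁₂ − κ₄₃·ν₁₄ = 0 and λ'₂₃ − λ₄₃·λ'₁₄ + λ₂₃·κ'₁₂ + κ₁₂·κ'₂₃ − λ₁₄·κ'₄₃ + κ₂₃·ν₁₂ − κ₄₃·μ₁₄ = 0 (equations (3.22) of the paper). -/
/-- Equations (3.22) of the paper: necessary G² conditions obtained from the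
mixed second derivatives at the vertex. -/
theorem g2_equations_3_22
    (a b A B C S T W P Q : EuclideanSpace ℝ (Fin 3))
    (hab : LinearIndependent ℝ ![a, b])
    (l12 l14 l23 l43 k12 k14 k23 k43 : ℝ)
    (h1 : k12 = l14 * k43)
    (h2 : k14 = l12 * k23)
    (h3 : l12 - l43 = k14 * k43)
    (h4 : l14 - l23 = k12 * k23)
    (l12' l14' l23' l43' k12' k14' k23' k43' m12 n12 m14 n14 : ℝ)
    (hS : S = l12' • a + l12 • B + k12' • b + k12 • C)
    (hW : W = k14' • a + l14' • b + l14 • B + k14 • A)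
    (hT1 : T = l43' • a + l43 • W + k43' • (l14 • b + k14 • a) + k43 • Q)
    (hT2 : T = l23' • b + l23 • S + k23' • (l12 • a + k12 • b) + k23 • P)
    (hP : P = (l12 ^ 2) • A + (2 * l12 * k12) • B + (k12 ^ 2) • C
        + m12 • a + n12 • b)
    (hQ : Q = (l14 ^ 2) • C + (2 * l14 * k14) • B + (k14 ^ 2) • A
        + m14 • b + n14 • a) :
    -l43' - l43 * k14' + l23 * l12' + l12 * k23' - k14 * k43'
        + k23 * m12 - k43 * n14 = 0 ∧
    l23' - l43 * l14' + l23 * k12' + k12 * k23' - l14 * k43'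
        + k23 * n12 - k43 * m14 = 0 := by
  subst hS hW hP hQ h1 h2
  have hl43 : l43 = l12 - l12 * k23 * k43 := by linarith
  have hl23 : l23 = l14 - l14 * k43 * k23 := by linarith
  subst hl43 hl23
  have h := sub_eq_zero_of_eq (hT1.symm.trans hT2)
  have key : (l43' + (l12 - l12 * k23 * k43) * k14' + k43' * (l12 * k23) + k43 * n14
      - (l14 - l14 * k43 * k23) * l12' - k23' * l12 - k23 * m12) • a
      + ((l12 - l12 * k23 * k43) * l14' + k43' * l14 + k43 * m14 - l23'
      - (l14 - l14 * k43 * k23) * k12' - k23' * (l14 * k43) - k23 * n12) • b = 0 := by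
    linear_combination (norm := module) h
  obtain ⟨e1, e2⟩ := LinearIndependent.pair_iff.mp hab _ _ key
  constructor
  · linear_combination -e1
  · linear_combination -e2
end

section
/- Let a, b be linearly independent vectors in ℝ³, let A, B, C, W, P, Q be vectors in ℝ³, let λ₁₂, λ₁₄, λ₂₃, λ₄₃, κ₁₂, κ₁₄, κ₂₃, κ₄₃ be real numbers satisfying the G¹ compatibility relations κ₁₂ = λ₁₄·κ₄₃, κ₁₄ = λ₁₂·κ₂₃, λ₁₂ − λ₄₃ = κ₁₄·κ₄₃, λ₁₄ − λ₂₃ = κ₁₂·κ₂₃, and let λ'₁₄, κ'₁₄, μ₁₂, ν₁₂, μ₁₄, ν₁₄, μ₄₃, ν₄₃ be real numbers. Assume: W = κ'₁₄·a + λ'₁₄·b + λ₁₄·B + κ₁₄·A; P = λ₁₂²·A + 2λ₁₂κ₁₂·B + κ₁₂²·C + μ₁₂·a + ν₁₂·b; Q = λ₁₄²·C + 2λ₁₄κ₁₄·B + κ₁₄²·A + μ₁₄·b + ν₁₄·a; and P = λ₄₃²·A + 2λ₄₃κ₄₃·W + κ₄₃²·Q + μ₄₃·a + ν₄₃·(λ₁₄·b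 + κ₁₄·a). Then μ₄₃ + 2λ₄₃κ₄₃·κ'₁₄ − μ₁₂ + ν₄₃·κ₁₄ + ν₁₄·κ₄₃² = 0 and 2λ₄₃κ₄₃·λ'₁₄ − ν₁₂ + ν₄₃·λ₁₄ + μ₁₄·κ₄₃² = 0 (equations (3.25) of the paper). -/
/-- Equations (3.25) of the paper. -/
theorem g2_equations_3_25
    (a b A B C W P Q : EuclideanSpace ℝ (Fin 3))
    (hab : LinearIndependent ℝ ![a, b])
    (l12 l14 l23 l43 k12 k14 k23 k43 : ℝ)
    (h1 : k12 = l14 * k43)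
    (h2 : k14 = l12 * k23)
    (h3 : l12 - l43 = k14 * k43)
    (h4 : l14 - l23 = k12 * k23)
    (l14' k14' m12 n12 m14 n14 m43 n43 : ℝ)
    (hW : W = k14' • a + l14' • b + l14 • B + k14 • A)
    (hP : P = (l12 ^ 2) • A + (2 * l12 * k12) • B + (k12 ^ 2) • C
        + m12 • a + n12 • b)
    (hQ : Q = (l14 ^ 2) • C + (2 * l14 * k14) • B + (k14 ^ 2) • A
        + m14 • b + n14 • a)
    (hP' : P = (l43 ^ 2) • A + (2 * l43 * k43) • W + (k43 ^ 2) • Q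
        + m43 • a + n43 • (l14 • b + k14 • a)) :
    m43 + 2 * l43 * k43 * k14' - m12 + n43 * k14 + n14 * k43 ^ 2 = 0 ∧
    2 * l43 * k43 * l14' - n12 + n43 * l14 + m14 * k43 ^ 2 = 0 := by
  subst hW hQ h1
  have h3' : l43 = l12 - k14 * k43 := by linarith
  subst h3'
  rw [LinearIndependent.pair_iff] at hab
  have key : (m43 + 2 * (l12 - k14 * k43) * k43 * k14' - m12 + n43 * k14 + n14 * k43 ^ 2) • a
      + (2 * (l12 - k14 * k43) * k43 * l14' - n12 + n43 * l14 + m14 * k43 ^ 2) • b = 0 := by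
    linear_combination (norm := module) hP - hP'
  exact hab _ _ key
end

section
/- Let a, b be linearly independent vectors in ℝ³, let A, B, C, S, P, Q be vectors in ℝ³, let λ₁₂, λ₁₄, λ₂₃, λ₄₃, κ₁₂, κ₁₄, κ₂₃, κ₄₃ be real numbers satisfying the G¹ compatibility relations κ₁₂ = λ₁₄·κ₄₃, κ₁₄ = λ₁₂·κ₂₃, λ₁₂ − λ₄₃ = κ₁₄·κ₄₃, λ₁₄ − λ₂₃ = κ₁₂·κ₂₃, and let λ'₁₂, κ'₁₂, μ₁₂, ν₁₂, μ₁₄, ν₁₄, μ₂₃, ν₂₃ be real numbers. Assume: S = λ'₁₂·a + λ₁₂·B + κ'₁₂·b + κ₁₂·C; P = λ₁₂²·A + 2λ₁₂κ₁₂·B + κ₁₂²·C + μ₁₂·a + ν₁₂·b; Q = λ₁₄²·C + 2λ₁₄κ₁₄·B + κ₁₄²·A + μ₁₄·b + ν₁₄·a; and Q = λ₂₃²·C + 2λ₂₃κ₂₃·S + κ₂₃²·P + μ₂₃·b + ν₂₃·(λ₁₂·a + κ₁₂·b). Then 2λ₂₃·λ'₁₂·κ₂₃ − ν₁₄ + ν₂₃·λ₁₂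 + μ₁₂·κ₂₃² = 0 and μ₂₃ + 2λ₂₃κ₂₃·κ'₁₂ − μ₁₄ + ν₂₃·κ₁₂ + ν₁₂·κ₂₃² = 0 (equations (3.26) of the paper). -/
/-- Equations (3.26) of the paper. -/
theorem g2_equations_3_26
    (a b A B C S P Q : EuclideanSpace ℝ (Fin 3))
    (hab : LinearIndependent ℝ ![a, b])
    (l12 l14 l23 l43 k12 k14 k23 k43 : ℝ)
    (h1 : k12 = l14 * k43)
    (h2 : k14 = l12 * k23)
    (h3 : l12 - l43 = k14 * k43)
    (h4 : l14 - l23 = k12 * k23)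
    (l12' k12' m12 n12 m14 n14 m23 n23 : ℝ)
    (hS : S = l12' • a + l12 • B + k12' • b + k12 • C)
    (hP : P = (l12 ^ 2) • A + (2 * l12 * k12) • B + (k12 ^ 2) • C
        + m12 • a + n12 • b)
    (hQ : Q = (l14 ^ 2) • C + (2 * l14 * k14) • B + (k14 ^ 2) • A
        + m14 • b + n14 • a)
    (hQ' : Q = (l23 ^ 2) • C + (2 * l23 * k23) • S + (k23 ^ 2) • P
        + m23 • b + n23 • (l12 • a + k12 • b)) :
    2 * l23 * l12' * k23 - n14 + n23 * l12 + m12 * k23 ^ 2 = 0 ∧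
    m23 + 2 * l23 * k23 * k12' - m14 + n23 * k12 + n12 * k23 ^ 2 = 0 := by
  subst h1 h2
  have hl23 : l23 = l14 - l14 * k43 * k23 := by linarith
  subst hl23
  have h := hQ.symm.trans hQ'
  rw [hS, hP] at h
  have h0 : (((l14 - l14 * k43 * k23) ^ 2) • C
        + (2 * (l14 - l14 * k43 * k23) * k23) •
            (l12' • a + l12 • B + k12' • b + (l14 * k43) • C)
        + (k23 ^ 2) • ((l12 ^ 2) • A + (2 * l12 * (l14 * k43)) • B
            + ((l14 * k43) ^ 2) • C + m12 • a + n12 • b)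
        + m23 • b + n23 • (l12 • a + (l14 * k43) • b))
      - ((l14 ^ 2) • C + (2 * l14 * (l12 * k23)) • B + ((l12 * k23) ^ 2) • A
        + m14 • b + n14 • a) = 0 := by
    rw [h]; abel
  have key : (2 * (l14 - l14 * k43 * k23) * l12' * k23 - n14 + n23 * l12 + m12 * k23 ^ 2) • a
      + (m23 + 2 * (l14 - l14 * k43 * k23) * k23 * k12' - m14 + n23 * (l14 * k43)
          + n12 * k23 ^ 2) • b = 0 := by
    rw [← h0]
    module
  obtain ⟨e1, e2⟩ := LinearIndependent.pair_iff.mp hab _ _ key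
  constructor <;> linarith
end

section
/- Let a, b be linearly independent vectors in ℝ³ and let A, B, C, S, T, W, P, Q be vectors in ℝ³. Let λ₁₂, λ₁₄, λ₂₃, λ₄₃, κ₁₂, κ₁₄, κ₂₃, κ₄₃ be real numbers satisfying the G¹ compatibility relations κ₁₂ = λ₁₄·κ₄₃, κ₁₄ = λ₁₂·κ₂₃, λ₁₂ − λ₄₃ = κ₁₄·κ₄₃, λ₁₄ − λ₂₃ = κ₁₂·κ₂₃, and let λ'₁₂, λ'₁₄, λ'₂₃, λ'₄₃, κ'₁₂, κ'₁₄, κ'₂₃, κ'₄₃, μ₁₂, ν₁₂, μ₁₄, ν₁₄, μ₂₃, ν₂₃, μ₄₃, ν₄₃ be real numbers. Assume the eight vertex equations: S = λ'₁₂·a + λ₁₂·B + κ'₁₂·b + κ₁₂·C; T = λ'₄₃·a + λ₄₃·W + κ'₄₃·(λ₁₄·b + κ₁₄·a) + κ₄₃·Q; W = κ'₁₄·a + λ'₁₄·b + λ₁₄·B + κ₁₄·A; T = λ'₂₃·b + λ₂₃·S + κ'₂₃·(λ₁₂·a + κ₁₂·b) + κ₂₃·P; P = λ₁₂²·A + 2λ₁₂κ₁₂·B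 + κ₁₂²·C + μ₁₂·a + ν₁₂·b; P = λ₄₃²·A + 2λ₄₃κ₄₃·W + κ₄₃²·Q + μ₄₃·a + ν₄₃·(λ₁₄·b + κ₁₄·a); Q = λ₂₃²·C + 2λ₂₃κ₂₃·S + κ₂₃²·P + μ₂₃·b + ν₂₃·(λ₁₂·a + κ₁₂·b); Q = λ₁₄²·C + 2λ₁₄κ₁₄·B + κ₁₄²·A + μ₁₄·b + ν₁₄·a. Then all six G² compatibility relations of Theorem 2 hold: (i) 2λ₄₃λ'₁₄κ₄₃ − ν₁₂ + ν₄₃λ₁₄ + μ₁₄κ₄₃² = 0; (ii) 2λ₂₃λ'₁₂κ₂₃ − ν₁₄ + ν₂₃λ₁₂ + μ₁₂κ₂₃² = 0; (iii) 2λ₄₃κ₄₃κ'₁₄ − μ₁₂ + μ₄₃ + ν₄₃κ₁₄ + ν₁₄κ₄₃² = 0; (iv) 2λ₂₃κ₂₃κ'₁₂ − μ₁₄ + μ₂₃ + ν₂₃κ₁₂ + ν₁₂κ₂₃² = 0; (v) λ'₄₃ − λ₂₃λ'₁₂ + λ₄₃κ'₁₄ − λ₁₂κ'₂₃ + κ₁₄κ'₄₃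 − μ₁₂κ₂₃ + ν₁₄κ₄₃ = 0; (vi) λ'₂₃ − λ₄₃λ'₁₄ + λ₂₃κ'₁₂ − λ₁₄κ'₄₃ + κ₁₂κ'₂₃ − μ₁₄κ₄₃ + ν₁₂κ₂₃ = 0. (Necessity part of Theorem 2: the G² compatibility conditions at the common vertex of a curvature-continuous 4-patch surface.) -/
set_option maxHeartbeats 1000000


/-- Necessity part of Theorem 2: the G² compatibility conditions at the common
vertex of a curvature-continuous 4-patch surface. -/
theorem g2_compatibility_necessary
    (a b A B C S T W P Q : EuclideanSpace ℝ (Fin 3))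
    (hab : LinearIndependent ℝ ![a, b])
    (l12 l14 l23 l43 k12 k14 k23 k43 : ℝ)
    (h1 : k12 = l14 * k43)
    (h2 : k14 = l12 * k23)
    (h3 : l12 - l43 = k14 * k43)
    (h4 : l14 - l23 = k12 * k23)
    (l12' l14' l23' l43' k12' k14' k23' k43'
      m12 n12 m14 n14 m23 n23 m43 n43 : ℝ)
    (hS : S = l12' • a + l12 • B + k12' • b + k12 • C)
    (hT1 : T = l43' • a + l43 • W + k43' • (l14 • b + k14 • a) + k43 • Q)
    (hW : W = k14' • a + l14' • b + l14 • B + k14 • A)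
    (hT2 : T = l23' • b + l23 • S + k23' • (l12 • a + k12 • b) + k23 • P)
    (hP : P = (l12 ^ 2) • A + (2 * l12 * k12) • B + (k12 ^ 2) • C
        + m12 • a + n12 • b)
    (hP' : P = (l43 ^ 2) • A + (2 * l43 * k43) • W + (k43 ^ 2) • Q
        + m43 • a + n43 • (l14 • b + k14 • a))
    (hQ' : Q = (l23 ^ 2) • C + (2 * l23 * k23) • S + (k23 ^ 2) • P
        + m23 • b + n23 • (l12 • a + k12 • b))
    (hQ : Q = (l14 ^ 2) • C + (2 * l14 * k14) • B + (k14 ^ 2) • A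
        + m14 • b + n14 • a) :
    2 * l43 * l14' * k43 - n12 + n43 * l14 + m14 * k43 ^ 2 = 0 ∧
    2 * l23 * l12' * k23 - n14 + n23 * l12 + m12 * k23 ^ 2 = 0 ∧
    2 * l43 * k43 * k14' - m12 + m43 + n43 * k14 + n14 * k43 ^ 2 = 0 ∧
    2 * l23 * k23 * k12' - m14 + m23 + n23 * k12 + n12 * k23 ^ 2 = 0 ∧
    l43' - l23 * l12' + l43 * k14' - l12 * k23' + k14 * k43'
      - m12 * k23 + n14 * k43 = 0 ∧
    l23' - l43 * l14' + l23 * k12' - l14 * k43' + k12 * k23'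
      - m14 * k43 + n12 * k23 = 0 := by

  -- eliminate dependent scalars
  have e3 : l43 = l12 - k14 * k43 := by linarith
  have e4 : l23 = l14 - k12 * k23 := by linarith
  subst h1 h2 e3 e4
  -- key vector equations
  rw [hW, hQ] at hP' hT1
  rw [hS, hP] at hQ' hT2
  have key1 : (2 * (l12 - l12 * k23 * k43) * k43 * k14' + k43 ^ 2 * n14 + m43
        + n43 * (l12 * k23) - m12) • a
      + (2 * (l12 - l12 * k23 * k43) * k43 * l14' + k43 ^ 2 * m14
        + n43 * l14 - n12) • b = (0 : EuclideanSpace ℝ (Fin 3)) := by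
    linear_combination (norm := module) hP - hP'
  have key2 : (2 * (l14 - l14 * k43 * k23) * k23 * l12' + k23 ^ 2 * m12
        + n23 * l12 - n14) • a
      + (2 * (l14 - l14 * k43 * k23) * k23 * k12' + k23 ^ 2 * n12 + m23
        + n23 * (l14 * k43) - m14) • b = (0 : EuclideanSpace ℝ (Fin 3)) := by
    linear_combination (norm := module) hQ - hQ'
  have key3 : (l43' + (l12 - l12 * k23 * k43) * k14' + k43' * (l12 * k23)
        + k43 * n14 - ((l14 - l14 * k43 * k23) * l12' + k23' * l12 + k23 * m12)) • a
      + ((l12 - l12 * k23 * k43) * l14' + k43' * l14 + k43 * m14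
        - (l23' + (l14 - l14 * k43 * k23) * k12' + k23' * (l14 * k43) + k23 * n12)) • b
        = (0 : EuclideanSpace ℝ (Fin 3)) := by
    linear_combination (norm := module) hT2 - hT1
  rw [LinearIndependent.pair_iff] at hab
  obtain ⟨p1, p2⟩ := hab _ _ key1
  obtain ⟨p3, p4⟩ := hab _ _ key2
  obtain ⟨p5, p6⟩ := hab _ _ key3
  refine ⟨by linear_combination p2, by linear_combination p3, by linear_combination p1,
    by linear_combination p4, by linear_combination p5, by linear_combination -p6⟩
end

section
/- Let q¹₂₂, q¹₂₃, q¹₃₂, q¹₃₃ be vectors in ℝ³ and λ₁₂, λ₁₄, α₂₃, α₄₃, β₂₃, β₄₃ real numbers. Let q²₀₂, q²₀₃, q²₁₂, q²₁₃ be vectors in ℝ³ satisfying q²₀₃ = q¹₃₃, q²₀₂ = q¹₃₂, q²₁₃ − q²₀₃ = λ₁₂·(q¹₃₃ − q¹₂₃), q²₁₂ − q²₀₂ = λ₁₂·(q¹₃₂ − q¹₂₂); and let q⁴₂₀, q⁴₃₀, q⁴₂₁, q⁴₃₁ be vectors in ℝ³ satisfying q⁴₃₀ = q¹₃₃, q⁴₂₀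 = q¹₂₃, q⁴₃₁ − q⁴₃₀ = λ₁₄·(q¹₃₃ − q¹₃₂), q⁴₂₁ − q⁴₂₀ = λ₁₄·(q¹₂₃ − q¹₂₂). Define Q₂₃ := 9λ₁₄·(q²₁₃ − q²₁₂) + 6α₂₃·(q²₀₃ − q²₀₂) + 9β₂₃·(q²₁₃ − q²₀₃) − 15λ₁₄·(q²₀₃ − q²₀₂) and Q₄₃ := 9λ₁₂·(q⁴₃₁ − q⁴₂₁) + 6α₄₃·(q⁴₃₀ − q⁴₂₀) + 9β₄₃·(q⁴₃₁ − q⁴₃₀) − 15λ₁₂·(q⁴₃₀ − q⁴₂₀). Then Q₂₃ − Q₄₃ = (9λ₁₂β₂₃ − 6(α₄₃ − λ₁₂))·(q¹₃₃ − q¹₂₃) + (6(α₂₃ − λ₁₄) − 9λ₁₄β₄₃)·(q¹₃₃ − q¹₃₂). Consequently, if q¹₃₃ − q¹₂₃ and q¹₃₃ − q¹₃₂ are linearly independent, then Q₂₃ = Q₄₃ if and only if 3λ₁₂·β₂₃ = 2(α₄₃ − λ₁₂) and 3λ₁₄·β₄₃ = 2(α₂₃ − λ₁₄) (condition (4.19)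 of the paper, characterizing unique consistent definition of the corner control point q⁽³⁾₁,₁). -/
/-- Condition (4.19) of the paper: the corner control point q⁽³⁾₁,₁ of the new
quintic patch is uniquely (consistently) defined if and only if the
coefficients satisfy 3λ₁₂β₂₃ = 2(α₄₃ − λ₁₂) and 3λ₁₄β₄₃ = 2(α₂₃ − λ₁₄). -/
theorem corner_control_point_compatibility
    (q1_22 q1_23 q1_32 q1_33 : EuclideanSpace ℝ (Fin 3))
    (l12 l14 a23 a43 b23 b43 : ℝ)
    (q2_02 q2_03 q2_12 q2_13 : EuclideanSpace ℝ (Fin 3))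
    (h2a : q2_03 = q1_33)
    (h2b : q2_02 = q1_32)
    (h2c : q2_13 - q2_03 = l12 • (q1_33 - q1_23))
    (h2d : q2_12 - q2_02 = l12 • (q1_32 - q1_22))
    (q4_20 q4_30 q4_21 q4_31 : EuclideanSpace ℝ (Fin 3))
    (h4a : q4_30 = q1_33)
    (h4b : q4_20 = q1_23)
    (h4c : q4_31 - q4_30 = l14 • (q1_33 - q1_32))
    (h4d : q4_21 - q4_20 = l14 • (q1_23 - q1_22))
    (Q23 Q43 : EuclideanSpace ℝ (Fin 3))
    (hQ23 : Q23 = (9 * l14) • (q2_13 - q2_12) + (6 * a23) • (q2_03 - q2_02)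
        + (9 * b23) • (q2_13 - q2_03) - (15 * l14) • (q2_03 - q2_02))
    (hQ43 : Q43 = (9 * l12) • (q4_31 - q4_21) + (6 * a43) • (q4_30 - q4_20)
        + (9 * b43) • (q4_31 - q4_30) - (15 * l12) • (q4_30 - q4_20)) :
    Q23 - Q43 = (9 * l12 * b23 - 6 * (a43 - l12)) • (q1_33 - q1_23)
        + (6 * (a23 - l14) - 9 * l14 * b43) • (q1_33 - q1_32) ∧
    (LinearIndependent ℝ ![q1_33 - q1_23, q1_33 - q1_32] →
      (Q23 = Q43 ↔
        3 * l12 * b23 = 2 * (a43 - l12) ∧ 3 * l14 * b43 = 2 * (a23 - l14))) := by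

  have e13 : q2_13 = q2_03 + l12 • (q1_33 - q1_23) := by
    rw [← h2c]; abel
  have e12 : q2_12 = q2_02 + l12 • (q1_32 - q1_22) := by
    rw [← h2d]; abel
  have e31 : q4_31 = q4_30 + l14 • (q1_33 - q1_32) := by
    rw [← h4c]; abel
  have e21 : q4_21 = q4_20 + l14 • (q1_23 - q1_22) := by
    rw [← h4d]; abel
  have hmain : Q23 - Q43 = (9 * l12 * b23 - 6 * (a43 - l12)) • (q1_33 - q1_23)
      + (6 * (a23 - l14) - 9 * l14 * b43) • (q1_33 - q1_32) := by
    subst hQ23 hQ43 e13 e12 e31 e21 h2a h2b h4a h4b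
    module
  refine ⟨hmain, fun hli => ?_⟩
  rw [LinearIndependent.pair_iff] at hli
  constructor
  · intro hQ
    have h0 : (9 * l12 * b23 - 6 * (a43 - l12)) • (q1_33 - q1_23)
        + (6 * (a23 - l14) - 9 * l14 * b43) • (q1_33 - q1_32) = 0 := by
      rw [← hmain, hQ]; abel
    obtain ⟨h1, h2⟩ := hli _ _ h0
    constructor <;> linarith
  · rintro ⟨h1, h2⟩
    have c1 : 9 * l12 * b23 - 6 * (a43 - l12) = 0 := by linarith
    have c2 : 6 * (a23 - l14) - 9 * l14 * b43 = 0 := by linarith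
    have := hmain
    rw [c1, c2, zero_smul, zero_smul, add_zero] at this
    exact sub_eq_zero.mp this
end
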